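/- Let N be a positive integer, and let A, B, I be the matrices defined as usual. Then for every real x ≠ 0, det((I+A) − (1/(4x²))(I−B)) = 0 if and only if U_{N+1}(x) · U'_{N+1}(x) = 0. In other words, the characteristic numbers of the matrix pencil I+A − λ(I−B) of the form λ = 1/(4x²) correspond exactly to the nonzero real roots x of U_{N+1}(x)·U'_{N+1}(x). -/

import Mathlib

open Polynomial Chebyshev

/-- Evaluation of the Chebyshev polynomial of the second kind. -/
noncomputable def Ucheb (n : ℤ) (x : ℝ) : ℝ := (Polynomial.Chebyshev.U ℝ n).eval x

/-- Evaluation of the derivative of the Chebyshev polynomial of the second kind. -/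
noncomputable def Ucheb' (n : ℤ) (x : ℝ) : ℝ :=
  (Polynomial.derivative (Polynomial.Chebyshev.U ℝ n)).eval x

/-- The N×N matrix with entries 1/2 on the first off-diagonals and 0 elsewhere. -/
noncomputable def matA (N : ℕ) : Matrix (Fin N) (Fin N) ℝ :=
  fun i j => if ((i : ℤ) - (j : ℤ)).natAbs = 1 then 1/2 else 0

/-- The N×N matrix with entries 1/2 on the second off-diagonals and 0 elsewhere. -/
noncomputable def matB (N : ℕ) : Matrix (Fin N) (Fin N) ℝ :=
  fun i j => if ((i : ℤ) - (j : ℤ)).natAbs = 2 then 1/2 else 0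

open Matrix

noncomputable section
namespace ChebAux

variable {N : ℕ} {v : Fin N → ℂ}



/-- The complexified pencil matrix with parameter μ. -/
def matM (N : ℕ) (μ : ℂ) : Matrix (Fin N) (Fin N) ℂ := fun i j =>
  (if i = j then 1 - μ else 0) + (if ((i : ℤ) - (j : ℤ)).natAbs = 1 then 1/2 else 0)
    + (if ((i : ℤ) - (j : ℤ)).natAbs = 2 then μ/2 else 0)

/-- The recurrence predicate (division-free form, γ playing the role of 4cos²th = 1/μ). -/
def Rec (γ : ℂ) (f : ℤ → ℂ) (j : ℤ) : Prop :=
  f (j-2) + f (j+2) + γ * (f (j-1) + f (j+1)) + (2*γ - 2) * f j = 0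

/-- Extension of a vector to an integer-indexed sequence, positions 1..N. -/
def extSeq (N : ℕ) (v : Fin N → ℂ) : ℤ → ℂ := fun k =>
  if h : 0 < k ∧ k ≤ N then v ⟨(k-1).toNat, by omega⟩ else 0

/-- First trig solution. -/
def u1 (th : ℂ) (j : ℤ) : ℂ := (-1:ℂ)^j * (Complex.cos th - Complex.cos ((2*(j:ℂ)+1)*th))

/-- Second trig solution. -/
def u2 (th : ℂ) (j : ℤ) : ℂ :=
  (-1:ℂ)^j * ((j:ℂ) * (2 * Complex.sin th * Complex.cos th) - Complex.sin (2*(j:ℂ)*th))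

lemma neg_one_ne : ((-1 : ℂ)) ≠ 0 := by norm_num

lemma zpow_p1 (j : ℤ) : (-1:ℂ)^(j+1) = -(-1:ℂ)^j := by
  rw [zpow_add₀ neg_one_ne, zpow_one]; ring

lemma zpow_p2 (j : ℤ) : (-1:ℂ)^(j+2) = (-1:ℂ)^j := by
  rw [zpow_add₀ neg_one_ne]; norm_num

lemma zpow_m1 (j : ℤ) : (-1:ℂ)^(j-1) = -(-1:ℂ)^j := by
  rw [zpow_sub₀ neg_one_ne, zpow_one]; field_simp

lemma zpow_m2 (j : ℤ) : (-1:ℂ)^(j-2) = (-1:ℂ)^j := by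
  rw [zpow_sub₀ neg_one_ne]; norm_num

lemma rec_u1 (th : ℂ) (j : ℤ) : Rec (4 * Complex.cos th^2) (u1 th) j := by
  unfold Rec u1
  rw [zpow_m2, zpow_p2, zpow_m1, zpow_p1]
  push_cast
  rw [show (2*((j:ℂ)-2)+1)*th = (2*(j:ℂ)+1)*th - (th+th) - (th+th) by ring]
  rw [show (2*((j:ℂ)+2)+1)*th = (2*(j:ℂ)+1)*th + (th+th) + (th+th) by ring]
  rw [show (2*((j:ℂ)-1)+1)*th = (2*(j:ℂ)+1)*th - (th+th) by ring]
  rw [show (2*((j:ℂ)+1)+1)*th = (2*(j:ℂ)+1)*th + (th+th) by ring]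
  simp only [Complex.cos_sub, Complex.sin_sub, Complex.cos_add, Complex.sin_add]
  linear_combination ((-2) * Complex.cos ((2*(j:ℂ)+1)*th) * (-1:ℂ)^j
    + (-2) * Complex.sin th * Complex.sin th * Complex.cos ((2*(j:ℂ)+1)*th) * (-1:ℂ)^j
    + 6 * Complex.cos th * Complex.cos th * Complex.cos ((2*(j:ℂ)+1)*th) * (-1:ℂ)^j)
    * Complex.sin_sq_add_cos_sq th

lemma rec_u2 (th : ℂ) (j : ℤ) : Rec (4 * Complex.cos th^2) (u2 th) j := by
  unfold Rec u2
  rw [zpow_m2, zpow_p2, zpow_m1, zpow_p1]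
  push_cast
  rw [show 2*((j:ℂ)-2)*th = 2*(j:ℂ)*th - (th+th) - (th+th) by ring]
  rw [show 2*((j:ℂ)+2)*th = 2*(j:ℂ)*th + (th+th) + (th+th) by ring]
  rw [show 2*((j:ℂ)-1)*th = 2*(j:ℂ)*th - (th+th) by ring]
  rw [show 2*((j:ℂ)+1)*th = 2*(j:ℂ)*th + (th+th) by ring]
  simp only [Complex.cos_sub, Complex.sin_sub, Complex.cos_add, Complex.sin_add]
  linear_combination ((-2) * Complex.sin (2*(j:ℂ)*th) * (-1:ℂ)^j
    + (-2) * Complex.sin th * Complex.sin th * Complex.sin (2*(j:ℂ)*th) * (-1:ℂ)^j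
    + 6 * Complex.cos th * Complex.cos th * Complex.sin (2*(j:ℂ)*th) * (-1:ℂ)^j)
    * Complex.sin_sq_add_cos_sq th



-- copy of defs for isolated test
lemma u1_zero (th : ℂ) : u1 th 0 = 0 := by
  unfold u1
  rw [show (2*((0:ℤ):ℂ)+1)*th = th by push_cast; ring]
  ring

lemma u1_neg_one (th : ℂ) : u1 th (-1) = 0 := by
  unfold u1
  rw [show (2*((-1:ℤ):ℂ)+1)*th = -th by push_cast; ring, Complex.cos_neg]
  ring

lemma u2_zero (th : ℂ) : u2 th 0 = 0 := by
  unfold u2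
  rw [show 2*((0:ℤ):ℂ)*th = 0 by push_cast; ring, Complex.sin_zero]
  push_cast; ring

lemma u2_neg_one (th : ℂ) : u2 th (-1) = 0 := by
  unfold u2
  rw [show 2*((-1:ℤ):ℂ)*th = -(th+th) by push_cast; ring, Complex.sin_neg, Complex.sin_add]
  push_cast; ring

lemma u2_one (th : ℂ) : u2 th 1 = 0 := by
  unfold u2
  rw [show 2*((1:ℤ):ℂ)*th = th+th by push_cast; ring, Complex.sin_add]
  push_cast; ring

lemma u1_one (th : ℂ) : u1 th 1 = -(4 * Complex.cos th * Complex.sin th^2) := by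
  unfold u1
  rw [show (2*((1:ℤ):ℂ)+1)*th = th+th+th by push_cast; ring]
  simp only [Complex.cos_add, Complex.sin_add]
  linear_combination (Complex.cos th) * Complex.sin_sq_add_cos_sq th

lemma u2_two (th : ℂ) : u2 th 2 = 8 * Complex.cos th * Complex.sin th^3 := by
  unfold u2
  rw [show 2*((2:ℤ):ℂ)*th = (th+th)+(th+th) by push_cast; ring]
  simp only [Complex.cos_add, Complex.sin_add]
  linear_combination ((-4) * Complex.sin th * Complex.cos th) * Complex.sin_sq_add_cos_sq th

lemma zpow_natCast' (n : ℕ) : (-1:ℂ)^((n:ℤ)) = (-1:ℂ)^n := zpow_natCast _ n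

lemma wron (th : ℂ) (N : ℕ) :
    u1 th ((N:ℤ)+1) * u2 th ((N:ℤ)+2) - u1 th ((N:ℤ)+2) * u2 th ((N:ℤ)+1)
      = -8 * Complex.cos th * Complex.sin th * Complex.sin (((N:ℂ)+2)*th) *
          (Complex.sin (((N:ℂ)+2)*th) * Complex.cos th
            - ((N:ℂ)+2) * Complex.cos (((N:ℂ)+2)*th) * Complex.sin th) := by
  have hA : (-1:ℂ)^((N:ℤ)+1) = -(-1:ℂ)^N := by
    rw [zpow_add₀ (by norm_num : (-1:ℂ) ≠ 0), zpow_one, zpow_natCast]; ring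
  have hB : (-1:ℂ)^((N:ℤ)+2) = (-1:ℂ)^N := by
    rw [zpow_add₀ (by norm_num : (-1:ℂ) ≠ 0), zpow_natCast]; norm_num
  have hE : ((-1:ℂ)^N) * ((-1:ℂ)^N) = 1 := by
    rw [← pow_add, ← two_mul, pow_mul]; norm_num
  unfold u1 u2
  rw [hA, hB]
  push_cast
  rw [show (2*((N:ℂ)+1)+1)*th = ((N:ℂ)+2)*th + ((N:ℂ)+2)*th - th by ring]
  rw [show (2*((N:ℂ)+2)+1)*th = ((N:ℂ)+2)*th + ((N:ℂ)+2)*th + th by ring]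
  rw [show 2*((N:ℂ)+1)*th = ((N:ℂ)+2)*th + ((N:ℂ)+2)*th - (th+th) by ring]
  rw [show 2*((N:ℂ)+2)*th = ((N:ℂ)+2)*th + ((N:ℂ)+2)*th by ring]
  simp only [Complex.cos_sub, Complex.sin_sub, Complex.cos_add, Complex.sin_add]
  set cc := Complex.cos th
  set ss := Complex.sin th
  set CC := Complex.cos (((N:ℂ)+2)*th)
  set SS := Complex.sin (((N:ℂ)+2)*th)
  set nn := ((N:ℂ)+2)
  linear_combination
    ((-4) * ss * CC * CC * SS * SS + (4) * ss * ss * ss * CC * CC * SS * SS + (2) * cc * CC * SS + (2) * cc * CC * SS * SS * SS + (-2) * cc * CC * CC * CC * SS + (-2) * cc * ss * ss * CC * SS + (8) * cc * ss * ss * CC * SS * nn + (-2) * cc * ss * ss * CC * SS * SS * SS + (2) * cc * ss * ss * CC * CC * CC * SS + (-2) * cc * cc * ss + (-4) * cc * cc * ss * SS * SS + (-2) * cc * cc * ss * SS * SS * SS * SS + (4) * cc * cc * ss * CC * CC + (-2) * cc * cc * ss * CC * CC * CC * CC + (-2) * cc * cc * cc * CC * SS + (-2) * cc * cc * cc * CC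 * SS * SS * SS + (2) * cc * cc * cc * CC * CC * CC * SS) * hE
    + ((4) * ss * CC * CC * SS * SS + (-2) * cc * CC * SS + (-2) * cc * CC * SS * SS * SS + (2) * cc * CC * CC * CC * SS) * Complex.sin_sq_add_cos_sq th
    + ((2) * cc * cc * ss + (-2) * cc * cc * ss * SS * SS + (-2) * cc * cc * ss * CC * CC) * Complex.sin_sq_add_cos_sq (((N:ℂ)+2)*th)




lemma extSeq_apply (i : Fin N) : extSeq N v ((i:ℤ)+1) = v i := by
  have hi := i.isLt
  rw [extSeq, dif_pos ⟨by omega, by omega⟩]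
  congr 1
  apply Fin.ext
  simp

lemma extSeq_zero {k : ℤ} (h : ¬(0 < k ∧ k ≤ N)) : extSeq N v k = 0 := dif_neg h

/-- generic indicator-sum evaluation -/
lemma sum_ind (g : ℤ → ℂ) (hg : ∀ k, ¬(0 < k ∧ k ≤ (N:ℤ)) → g k = 0) (a : ℤ) :
    (∑ j : Fin N, if (j:ℤ)+1 = a then g a else 0) = g a := by
  by_cases ha : 0 < a ∧ a ≤ (N:ℤ)
  · have hlt : (a-1).toNat < N := by omega
    rw [Finset.sum_congr rfl (g := fun j => if j = (⟨(a-1).toNat, hlt⟩ : Fin N) then g a else 0)]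
    · simp
    · intro j _
      by_cases h : j = (⟨(a-1).toNat, hlt⟩ : Fin N)
      · subst h
        rw [if_pos (by simp; omega), if_pos rfl]
      · have h' : (j:ℕ) ≠ (a-1).toNat := fun hh => h (Fin.ext hh)
        rw [if_neg (by omega), if_neg h]
  · rw [Finset.sum_eq_zero, hg a ha]
    intro j _
    have hj := j.isLt
    rw [if_neg (by omega)]




lemma point_eq (μ : ℂ) (i j : Fin N) :
    matM N μ i j * v j
      = (if (j:ℤ)+1 = (i:ℤ)+1 then (1-μ) * extSeq N v ((i:ℤ)+1) else 0)
        + ((if (j:ℤ)+1 = (i:ℤ) then (1/2) * extSeq N v (i:ℤ) else 0)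
          + (if (j:ℤ)+1 = (i:ℤ)+2 then (1/2) * extSeq N v ((i:ℤ)+2) else 0))
        + ((if (j:ℤ)+1 = (i:ℤ)-1 then (μ/2) * extSeq N v ((i:ℤ)-1) else 0)
          + (if (j:ℤ)+1 = (i:ℤ)+3 then (μ/2) * extSeq N v ((i:ℤ)+3) else 0)) := by
  have hv : extSeq N v ((j:ℤ)+1) = v j := extSeq_apply j
  simp only [matM]
  by_cases h0 : i = j
  · subst h0
    rw [if_pos rfl, if_neg (by omega), if_neg (by omega),
      if_pos (show (i:ℤ)+1 = (i:ℤ)+1 from rfl), if_neg (by omega), if_neg (by omega),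
      if_neg (by omega), if_neg (by omega), hv]
    ring
  · have h0' : ¬ ((i:ℕ) = (j:ℕ)) := fun hh => h0 (Fin.ext hh)
    rw [if_neg h0]
    by_cases ha : (j:ℤ)+1 = (i:ℤ)
    · rw [if_pos (by omega), if_neg (by omega),
        if_neg (by omega), if_pos ha, if_neg (by omega), if_neg (by omega), if_neg (by omega),
        ← ha, hv]
      ring
    · by_cases hb : (j:ℤ)+1 = (i:ℤ)+2
      · rw [if_pos (by omega), if_neg (by omega),
          if_neg (by omega), if_neg ha, if_pos hb, if_neg (by omega), if_neg (by omega),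
          ← hb, hv]
        ring
      · by_cases hc : (j:ℤ)+1 = (i:ℤ)-1
        · rw [if_neg (by omega), if_pos (by omega),
            if_neg (by omega), if_neg ha, if_neg hb, if_pos hc, if_neg (by omega),
            ← hc, hv]
          ring
        · by_cases hd : (j:ℤ)+1 = (i:ℤ)+3
          · rw [if_neg (by omega), if_pos (by omega),
              if_neg (by omega), if_neg ha, if_neg hb, if_neg hc, if_pos hd, ← hd, hv]
            ring
          · rw [if_neg (by omega), if_neg (by omega),
              if_neg (by omega), if_neg ha, if_neg hb, if_neg hc, if_neg hd]
            ring

lemma row_rec (μ γ : ℂ) (hμγ : μ * γ = 1) (i : Fin N) :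
    (matM N μ *ᵥ v) i
      = (μ/2) * (extSeq N v ((i:ℤ)+1-2) + extSeq N v ((i:ℤ)+1+2)
          + γ * (extSeq N v ((i:ℤ)+1-1) + extSeq N v ((i:ℤ)+1+1))
          + (2*γ-2) * extSeq N v ((i:ℤ)+1)) := by
  have hzero : ∀ (cfc : ℂ) (k : ℤ), ¬(0 < k ∧ k ≤ (N:ℤ)) → cfc * extSeq N v k = 0 := by
    intro cfc k hk
    rw [extSeq_zero (by exact_mod_cast hk), mul_zero]
  have : (matM N μ *ᵥ v) i = ∑ j : Fin N, matM N μ i j * v j := rfl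
  rw [this, Finset.sum_congr rfl (fun j _ => point_eq μ i j),
    Finset.sum_add_distrib, Finset.sum_add_distrib, Finset.sum_add_distrib,
    Finset.sum_add_distrib,
    sum_ind (fun k => (1-μ) * extSeq N v k) (hzero _) ((i:ℤ)+1),
    sum_ind (fun k => (1/2) * extSeq N v k) (hzero _) ((i:ℤ)),
    sum_ind (fun k => (1/2) * extSeq N v k) (hzero _) ((i:ℤ)+2),
    sum_ind (fun k => (μ/2) * extSeq N v k) (hzero _) ((i:ℤ)-1),
    sum_ind (fun k => (μ/2) * extSeq N v k) (hzero _) ((i:ℤ)+3)]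
  have e1 : (i:ℤ)+1-2 = (i:ℤ)-1 := by ring
  have e2 : (i:ℤ)+1+2 = (i:ℤ)+3 := by ring
  have e3 : (i:ℤ)+1-1 = (i:ℤ) := by ring
  have e4 : (i:ℤ)+1+1 = (i:ℤ)+2 := by ring
  rw [e1, e2, e3, e4]
  linear_combination (-((extSeq N v (i:ℤ) + extSeq N v ((i:ℤ)+2))/2 + extSeq N v ((i:ℤ)+1))) * hμγ



lemma mulVec_zero_iff {v : Fin N → ℂ} {μ γ : ℂ} (hμ : μ ≠ 0) (hμγ : μ * γ = 1) :
    matM N μ *ᵥ v = 0 ↔ ∀ j : ℤ, 1 ≤ j → j ≤ (N:ℤ) → Rec γ (extSeq N v) j := by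
  constructor
  · intro h j hj1 hj2
    set i : Fin N := ⟨(j-1).toNat, by omega⟩ with hi
    have hiv : (i:ℤ) = j - 1 := by simp [hi]; omega
    have hrow := row_rec (v := v) μ γ hμγ i
    rw [congrFun h i, Pi.zero_apply] at hrow
    have hexpr := (mul_eq_zero.mp hrow.symm).resolve_left (by
      simpa using hμ)
    unfold Rec
    rw [hiv] at hexpr
    rw [show j-1+1-2 = j-2 by ring, show j-1+1+2 = j+2 by ring,
      show j-1+1-1 = j-1 by ring, show j-1+1+1 = j+1 by ring,
      show j-1+1 = j by ring] at hexpr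
    exact hexpr
  · intro h
    funext i
    have hi := i.isLt
    rw [row_rec μ γ hμγ i, h ((i:ℤ)+1) (by omega) (by omega), mul_zero]
    simp

lemma vanish {γ : ℂ} {f : ℤ → ℂ}
    (hrec : ∀ j : ℤ, 1 ≤ j → j ≤ (N:ℤ) → Rec γ f j)
    (hm : f (-1) = 0) (h0 : f 0 = 0) (h1 : f 1 = 0) (h2 : f 2 = 0) :
    ∀ j : ℤ, -1 ≤ j → j ≤ (N:ℤ)+2 → f j = 0 := by
  suffices H : ∀ m : ℕ, ∀ j : ℤ, -1 ≤ j → j ≤ (N:ℤ)+2 → j < m → f j = 0 by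
    intro j hj1 hj2
    exact H (N+3) j hj1 hj2 (by omega)
  intro m
  induction m with
  | zero =>
    intro j hj1 hj2 hj3
    have : j = -1 := by omega
    rw [this]; exact hm
  | succ m ih =>
    intro j hj1 hj2 hj3
    by_cases hsmall : j ≤ 2
    · have : j = -1 ∨ j = 0 ∨ j = 1 ∨ j = 2 := by omega
      rcases this with h|h|h|h <;> rw [h] <;> assumption
    · have hr := hrec (j-2) (by omega) (by omega)
      unfold Rec at hr
      rw [show j-2-2 = j-4 by ring, show j-2+2 = j by ring,
        show j-2-1 = j-3 by ring, show j-2+1 = j-1 by ring] at hr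
      rw [ih (j-4) (by omega) (by omega) (by omega),
        ih (j-3) (by omega) (by omega) (by omega),
        ih (j-1) (by omega) (by omega) (by omega),
        ih (j-2) (by omega) (by omega) (by omega)] at hr
      linear_combination hr

/-- Abstract kernel ↔ Wronskian lemma. -/
lemma det_zero_iff_wron (hN : 0 < N) {μ γ : ℂ} (hμ : μ ≠ 0) (hμγ : μ * γ = 1)
    {a b : ℤ → ℂ} (ha : ∀ j, Rec γ a j) (hb : ∀ j, Rec γ b j)
    (ham : a (-1) = 0) (ha0 : a 0 = 0) (hbm : b (-1) = 0) (hb0 : b 0 = 0) (hb1 : b 1 = 0)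
    (ha1 : a 1 ≠ 0) (hb2 : b 2 ≠ 0) :
    (matM N μ).det = 0
      ↔ a ((N:ℤ)+1) * b ((N:ℤ)+2) - a ((N:ℤ)+2) * b ((N:ℤ)+1) = 0 := by
  rw [← Matrix.exists_mulVec_eq_zero_iff]
  constructor
  · rintro ⟨v, hv0, hMv⟩
    set V := extSeq N v with hV
    have hrecV := (mulVec_zero_iff hμ hμγ).mp hMv
    set c₁ := V 1 / a 1 with hc₁
    set c₂ := (V 2 - c₁ * a 2) / b 2 with hc₂
    set u : ℤ → ℂ := fun j => c₁ * a j + c₂ * b j with hu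
    have hrecu : ∀ j, Rec γ u j := by
      intro j
      have haj := ha j
      have hbj := hb j
      unfold Rec at haj hbj ⊢
      simp only [hu]
      linear_combination c₁ * haj + c₂ * hbj
    have hrecf : ∀ j : ℤ, 1 ≤ j → j ≤ (N:ℤ) → Rec γ (fun k => V k - u k) j := by
      intro j hj1 hj2
      have h1' := hrecV j hj1 hj2
      have h2' := hrecu j
      unfold Rec at h1' h2' ⊢
      linear_combination h1' - h2'
    have hvan := vanish hrecf
      (by simp [hV, hu, extSeq_zero (show ¬((0:ℤ) < -1 ∧ (-1:ℤ) ≤ N) by omega), ham, hbm])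
      (by simp [hV, hu, extSeq_zero (show ¬((0:ℤ) < 0 ∧ (0:ℤ) ≤ N) by omega), ha0, hb0])
      (by
        simp only [hu, hb1, mul_zero, add_zero, hc₁]
        field_simp
        ring)
      (by
        simp only [hu, hc₂, hc₁]
        field_simp
        ring)
    have hagree : ∀ j : ℤ, -1 ≤ j → j ≤ (N:ℤ)+2 → V j = u j := by
      intro j hj1 hj2
      exact sub_eq_zero.mp (hvan j hj1 hj2)
    have hVout1 : V ((N:ℤ)+1) = 0 := extSeq_zero (by omega)
    have hVout2 : V ((N:ℤ)+2) = 0 := extSeq_zero (by omega)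
    have hu1 : c₁ * a ((N:ℤ)+1) + c₂ * b ((N:ℤ)+1) = 0 := by
      have := (hagree ((N:ℤ)+1) (by omega) (by omega)).symm
      rw [hVout1] at this
      simpa [hu] using this
    have hu2 : c₁ * a ((N:ℤ)+2) + c₂ * b ((N:ℤ)+2) = 0 := by
      have := (hagree ((N:ℤ)+2) (by omega) (by omega)).symm
      rw [hVout2] at this
      simpa [hu] using this
    by_cases hcc : c₁ = 0 ∧ c₂ = 0
    · exfalso
      apply hv0
      funext i
      have hi := i.isLt
      have := hagree ((i:ℤ)+1) (by omega) (by omega)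
      rw [hV, extSeq_apply i] at this
      rw [this]
      simp [hu, hcc.1, hcc.2]
    · rcases not_and_or.mp hcc with hc | hc
      · have : c₁ * (a ((N:ℤ)+1) * b ((N:ℤ)+2) - a ((N:ℤ)+2) * b ((N:ℤ)+1)) = 0 := by
          linear_combination b ((N:ℤ)+2) * hu1 - b ((N:ℤ)+1) * hu2
        exact (mul_eq_zero.mp this).resolve_left hc
      · have : c₂ * (a ((N:ℤ)+1) * b ((N:ℤ)+2) - a ((N:ℤ)+2) * b ((N:ℤ)+1)) = 0 := by
          linear_combination a ((N:ℤ)+1) * hu2 - a ((N:ℤ)+2) * hu1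
        exact (mul_eq_zero.mp this).resolve_left hc
  · intro hWr
    -- choose coefficients
    obtain ⟨c₁, c₂, hcc, hU1, hU2⟩ :
        ∃ c₁ c₂ : ℂ, ¬(c₁ = 0 ∧ c₂ = 0)
          ∧ c₁ * a ((N:ℤ)+1) + c₂ * b ((N:ℤ)+1) = 0
          ∧ c₁ * a ((N:ℤ)+2) + c₂ * b ((N:ℤ)+2) = 0 := by
      by_cases hA : a ((N:ℤ)+1) = 0 ∧ b ((N:ℤ)+1) = 0
      · by_cases hB : a ((N:ℤ)+2) = 0 ∧ b ((N:ℤ)+2) = 0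
        · exact ⟨1, 0, by simp, by simp [hA.1, hA.2], by simp [hB.1, hB.2]⟩
        · refine ⟨b ((N:ℤ)+2), -(a ((N:ℤ)+2)), ?_, ?_, by ring⟩
          · intro h
            exact hB ⟨by simpa using congrArg Neg.neg h.2, h.1⟩
          · rw [hA.1, hA.2]; ring
      · refine ⟨b ((N:ℤ)+1), -(a ((N:ℤ)+1)), ?_, by ring, ?_⟩
        · intro h
          exact hA ⟨by simpa using congrArg Neg.neg h.2, h.1⟩
        · linear_combination -hWr
    set u : ℤ → ℂ := fun j => c₁ * a j + c₂ * b j with hu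
    have hrecu : ∀ j, Rec γ u j := by
      intro j
      have haj := ha j
      have hbj := hb j
      unfold Rec at haj hbj ⊢
      simp only [hu]
      linear_combination c₁ * haj + c₂ * hbj
    set v : Fin N → ℂ := fun i => u ((i:ℤ)+1) with hv
    have hagree : ∀ k : ℤ, -1 ≤ k → k ≤ (N:ℤ)+2 → extSeq N v k = u k := by
      intro k hk1 hk2
      by_cases hk : 0 < k ∧ k ≤ (N:ℤ)
      · rw [extSeq, dif_pos (by exact_mod_cast hk)]
        simp only [hv]
        congr 1
        omega
      · rw [extSeq_zero (by exact_mod_cast hk)]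
        have : k = -1 ∨ k = 0 ∨ k = (N:ℤ)+1 ∨ k = (N:ℤ)+2 := by omega
        rcases this with h|h|h|h <;> subst h
        · simp [hu, ham, hbm]
        · simp [hu, ha0, hb0]
        · exact hU1.symm
        · exact hU2.symm
    refine ⟨v, ?_, ?_⟩
    · intro hv0
      have h1 : u 1 = 0 := by
        have := congrFun hv0 ⟨0, hN⟩
        simpa [hv] using this
      have hc1 : c₁ = 0 := by
        have : c₁ * a 1 = 0 := by
          rw [← h1]; simp [hu, hb1]
        exact (mul_eq_zero.mp this).resolve_right ha1
      have h2 : u 2 = 0 := by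
        rcases Nat.lt_or_ge 1 N with hN2 | hN2
        · have := congrFun hv0 ⟨1, hN2⟩
          simpa [hv] using this
        · have hNeq : N = 1 := by omega
          rw [show (2:ℤ) = (N:ℤ)+1 by omega]
          rw [hu]
          exact hU1
      have hc2 : c₂ = 0 := by
        have : c₂ * b 2 = 0 := by
          rw [← h2]; simp [hu, hc1]
        exact (mul_eq_zero.mp this).resolve_right hb2
      exact hcc ⟨hc1, hc2⟩
    · rw [mulVec_zero_iff hμ hμγ]
      intro j hj1 hj2
      have hru := hrecu j
      unfold Rec at hru ⊢
      rw [hagree (j-2) (by omega) (by omega), hagree (j+2) (by omega) (by omega),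
        hagree (j-1) (by omega) (by omega), hagree (j+1) (by omega) (by omega),
        hagree j (by omega) (by omega)]
      exact hru




/-- derivative identity: U'_{m}(cos th) * sin³th = sin((m+1)th)costh - (m+1)cos((m+1)th)sinth -/
lemma deriv_eval (m : ℕ) (th : ℂ) :
    (derivative (U ℂ (m:ℤ))).eval (Complex.cos th) * Complex.sin th^3
      = Complex.sin (((m:ℂ)+1)*th) * Complex.cos th
        - ((m:ℂ)+1) * Complex.cos (((m:ℂ)+1)*th) * Complex.sin th := by
  have hfun : (fun φ : ℂ => (U ℂ (m:ℤ)).eval (Complex.cos φ) * Complex.sin φ)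
      = (fun φ : ℂ => Complex.sin (((m:ℂ)+1)*φ)) := by
    funext φ
    have h := Polynomial.Chebyshev.U_complex_cos φ (m:ℤ)
    push_cast at h
    exact h
  have h1 : HasDerivAt (fun φ : ℂ => (U ℂ (m:ℤ)).eval (Complex.cos φ) * Complex.sin φ)
      ((derivative (U ℂ (m:ℤ))).eval (Complex.cos th) * (-Complex.sin th) * Complex.sin th
        + (U ℂ (m:ℤ)).eval (Complex.cos th) * Complex.cos th) th := by
    exact (((U ℂ (m:ℤ)).hasDerivAt (Complex.cos th)).comp th (Complex.hasDerivAt_cos th)).mul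
      (Complex.hasDerivAt_sin th)
  have hlin : HasDerivAt (fun φ : ℂ => ((m:ℂ)+1)*φ) ((m:ℂ)+1) th := by
    simpa using (hasDerivAt_id th).const_mul ((m:ℂ)+1)
  have h2 : HasDerivAt (fun φ : ℂ => Complex.sin (((m:ℂ)+1)*φ))
      (Complex.cos (((m:ℂ)+1)*th) * ((m:ℂ)+1)) th := by
    exact (Complex.hasDerivAt_sin (((m:ℂ)+1)*th)).comp th hlin
  have hEq := (hfun ▸ h1).unique h2
  have hUs' : (U ℂ (m:ℤ)).eval (Complex.cos th) * Complex.sin th = Complex.sin (((m:ℂ)+1)*th) := by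
    have h := Polynomial.Chebyshev.U_complex_cos th (m:ℤ)
    push_cast at h
    exact h
  linear_combination (-(Complex.sin th)) * hEq + Complex.cos th * hUs'

lemma U_eval_one (n : ℕ) : (U ℝ (n:ℤ)).eval 1 = (n:ℝ)+1 := by
  induction n using Nat.strong_induction_on with
  | _ n ih =>
    match n with
    | 0 => simp [Polynomial.Chebyshev.U_zero]
    | 1 => norm_num [Polynomial.Chebyshev.U_one]
    | (m+2) =>
      have hcast : ((m+2 : ℕ) : ℤ) = (m:ℤ)+2 := by push_cast; ring
      rw [hcast, Polynomial.Chebyshev.U_add_two]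
      have h1 : ((m:ℤ)+1) = ((m+1 : ℕ) : ℤ) := by push_cast; ring
      rw [h1]
      simp only [eval_sub, eval_mul, eval_ofNat, eval_X]
      rw [ih (m+1) (by omega), ih m (by omega)]
      push_cast
      ring

lemma U_eval_neg_one (n : ℕ) : (U ℝ (n:ℤ)).eval (-1) = (-1:ℝ)^n * ((n:ℝ)+1) := by
  induction n using Nat.strong_induction_on with
  | _ n ih =>
    match n with
    | 0 => simp [Polynomial.Chebyshev.U_zero]
    | 1 => norm_num [Polynomial.Chebyshev.U_one]
    | (m+2) =>
      have hcast : ((m+2 : ℕ) : ℤ) = (m:ℤ)+2 := by push_cast; ring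
      rw [hcast, Polynomial.Chebyshev.U_add_two]
      have h1 : ((m:ℤ)+1) = ((m+1 : ℕ) : ℤ) := by push_cast; ring
      rw [h1]
      simp only [eval_sub, eval_mul, eval_ofNat, eval_X]
      rw [ih (m+1) (by omega), ih m (by omega)]
      push_cast
      ring

/-- the derivative values at 1 -/
lemma derivU_rec (m : ℕ) :
    (derivative (U ℝ ((m:ℤ)+2))) = 2 * U ℝ ((m:ℤ)+1) + 2 * X * derivative (U ℝ ((m:ℤ)+1))
      - derivative (U ℝ (m:ℤ)) := by
  have := Polynomial.Chebyshev.U_add_two ℝ (m:ℤ)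
  calc derivative (U ℝ ((m:ℤ)+2)) = derivative (2 * X * U ℝ ((m:ℤ)+1) - U ℝ (m:ℤ)) := by rw [this]
  _ = _ := by
      rw [derivative_sub, derivative_mul, derivative_mul]
      simp [derivative_X, derivative_ofNat]
      try ring

lemma derivU_one_mono (n : ℕ) :
    0 ≤ (derivative (U ℝ (n:ℤ))).eval 1
      ∧ (derivative (U ℝ (n:ℤ))).eval 1 ≤ (derivative (U ℝ ((n:ℤ)+1))).eval 1 := by
  induction n with
  | zero => simp [Polynomial.Chebyshev.U_zero, Polynomial.Chebyshev.U_one]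
  | succ m ih =>
    obtain ⟨h1, h2⟩ := ih
    have hme : ((m:ℤ)+1) = ((m+1:ℕ):ℤ) := by push_cast; ring
    constructor
    · rw [← hme]; linarith
    · have hrec := congrArg (fun p => Polynomial.eval (1:ℝ) p) (derivU_rec m)
      simp only [eval_add, eval_sub, eval_mul, eval_ofNat, eval_X, one_mul, eval_one] at hrec
      have hU1 : (U ℝ ((m:ℤ)+1)).eval 1 = (m:ℝ)+2 := by
        rw [hme, U_eval_one (m+1)]; push_cast; ring
      rw [hU1] at hrec
      have : ((m+1:ℕ):ℤ)+1 = (m:ℤ)+2 := by push_cast; ring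
      rw [this, hrec, ← hme]
      linarith

lemma derivU_one_pos (n : ℕ) (hn : 1 ≤ n) : 0 < (derivative (U ℝ (n:ℤ))).eval 1 := by
  have hbase : (derivative (U ℝ ((1:ℕ):ℤ))).eval 1 = 2 := by
    norm_num [Polynomial.Chebyshev.U_one]
  have hchain : ∀ k : ℕ, (2:ℝ) ≤ (derivative (U ℝ ((k+1:ℕ):ℤ))).eval 1 := by
    intro k
    induction k with
    | zero => rw [show ((0+1:ℕ):ℤ) = ((1:ℕ):ℤ) by norm_num, hbase]
    | succ l ih =>
      have := (derivU_one_mono (l+1)).2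
      have hc : ((l+1:ℕ):ℤ)+1 = ((l+1+1:ℕ):ℤ) := by push_cast; ring
      rw [hc] at this
      linarith
  obtain ⟨k, rfl⟩ : ∃ k, n = k+1 := ⟨n-1, by omega⟩
  linarith [hchain k]

lemma derivU_neg_one (n : ℕ) :
    (derivative (U ℝ (n:ℤ))).eval (-1) = (-1:ℝ)^(n+1) * (derivative (U ℝ (n:ℤ))).eval 1 := by
  induction n using Nat.strong_induction_on with
  | _ n ih =>
    match n with
    | 0 => simp [Polynomial.Chebyshev.U_zero]
    | 1 => norm_num [Polynomial.Chebyshev.U_one]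
    | (m+2) =>
      have hcast : ((m+2 : ℕ) : ℤ) = (m:ℤ)+2 := by push_cast; ring
      have hrecm := congrArg (fun p => Polynomial.eval (-1:ℝ) p) (derivU_rec m)
      have hrecp := congrArg (fun p => Polynomial.eval (1:ℝ) p) (derivU_rec m)
      simp only [eval_add, eval_sub, eval_mul, eval_ofNat, eval_X, one_mul, eval_one] at hrecm hrecp
      have hm1 : ((m:ℤ)+1) = ((m+1:ℕ):ℤ) := by push_cast; ring
      rw [hcast, hrecm, hrecp, hm1, U_eval_neg_one (m+1), U_eval_one (m+1),
        ih (m+1) (by omega), ih m (by omega)]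
      push_cast
      ring




def p1 (j : ℤ) : ℂ := (-1:ℂ)^j * ((j:ℂ) * ((j:ℂ)+1))
def p2 (j : ℤ) : ℂ := (-1:ℂ)^j * (((j:ℂ)-1) * (j:ℂ) * ((j:ℂ)+1))

lemma rec_p1 (j : ℤ) : Rec 4 p1 j := by
  unfold Rec p1
  rw [zpow_m2, zpow_p2, zpow_m1, zpow_p1]
  push_cast
  ring

lemma rec_p2 (j : ℤ) : Rec 4 p2 j := by
  unfold Rec p2
  rw [zpow_m2, zpow_p2, zpow_m1, zpow_p1]
  push_cast
  ring

lemma p1_neg_one : p1 (-1) = 0 := by unfold p1; push_cast; ring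
lemma p1_zero : p1 0 = 0 := by unfold p1; push_cast; ring
lemma p2_neg_one : p2 (-1) = 0 := by unfold p2; push_cast; ring
lemma p2_zero : p2 0 = 0 := by unfold p2; push_cast; ring
lemma p2_one : p2 1 = 0 := by unfold p2; push_cast; ring
lemma p1_one : p1 1 = -2 := by
  unfold p1; rw [zpow_one]; push_cast; ring
lemma p2_two : p2 2 = 6 := by
  unfold p2
  rw [show (2:ℤ) = (0:ℤ)+2 by norm_num, zpow_p2 0, zpow_zero]
  push_cast
  ring

lemma wron_poly (N : ℕ) :
    p1 ((N:ℤ)+1) * p2 ((N:ℤ)+2) - p1 ((N:ℤ)+2) * p2 ((N:ℤ)+1)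
      = -(((N:ℂ)+1) * ((N:ℂ)+2)^2 * ((N:ℂ)+3)) := by
  have hA : (-1:ℂ)^((N:ℤ)+1) = -(-1:ℂ)^N := by
    rw [zpow_add₀ neg_one_ne, zpow_one, zpow_natCast]; ring
  have hB : (-1:ℂ)^((N:ℤ)+2) = (-1:ℂ)^N := by
    rw [zpow_add₀ neg_one_ne, zpow_natCast]; norm_num
  have hE : ((-1:ℂ)^N) * ((-1:ℂ)^N) = 1 := by
    rw [← pow_add, ← two_mul, pow_mul]; norm_num
  unfold p1 p2
  rw [hA, hB]
  push_cast
  linear_combination (-(((N:ℂ)+1) * ((N:ℂ)+2)^2 * ((N:ℂ)+3))) * hE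




lemma map_pencil (N : ℕ) (r : ℝ) :
    (((1 : Matrix (Fin N) (Fin N) ℝ) + matA N)
        - r • ((1 : Matrix (Fin N) (Fin N) ℝ) - matB N)).map (algebraMap ℝ ℂ)
      = matM N (r:ℂ) := by
  ext i j
  simp only [Matrix.map_apply, Matrix.sub_apply, Matrix.add_apply, Matrix.smul_apply,
    Matrix.one_apply, matA, matB, matM, smul_eq_mul, Complex.coe_algebraMap]
  by_cases h0 : i = j
  · subst h0
    rw [if_pos rfl, if_pos rfl, if_neg (by omega), if_neg (by omega), if_neg (by omega),
      if_neg (by omega)]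
    push_cast
    ring_nf
  · rw [if_neg h0, if_neg h0]
    have h0' : ¬ ((i:ℕ) = (j:ℕ)) := fun hh => h0 (Fin.ext hh)
    by_cases h1 : ((i:ℤ) - (j:ℤ)).natAbs = 1
    · rw [if_pos h1, if_pos h1, if_neg (by omega), if_neg (by omega)]
      push_cast
      ring_nf
    · rw [if_neg h1, if_neg h1]
      by_cases h2 : ((i:ℤ) - (j:ℤ)).natAbs = 2
      · rw [if_pos h2, if_pos h2]
        push_cast
        ring_nf
      · rw [if_neg h2, if_neg h2]
        push_cast
        ring_nf

lemma key_trig (N : ℕ) (hN : 0 < N) (th : ℂ) (hc : Complex.cos th ≠ 0)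
    (hs : Complex.sin th ≠ 0) :
    (matM N (1/(4*Complex.cos th^2))).det = 0
      ↔ (U ℂ ((N:ℤ)+1)).eval (Complex.cos th)
          * (derivative (U ℂ ((N:ℤ)+1))).eval (Complex.cos th) = 0 := by
  have hc4 : (4*Complex.cos th^2 : ℂ) ≠ 0 :=
    mul_ne_zero (by norm_num) (pow_ne_zero 2 hc)
  have hμ : (1/(4*Complex.cos th^2) : ℂ) ≠ 0 := one_div_ne_zero hc4
  have hμγ : (1/(4*Complex.cos th^2)) * (4*Complex.cos th^2) = 1 := by
    field_simp
  have ha1 : u1 th 1 ≠ 0 := by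
    rw [u1_one th]
    exact neg_ne_zero.mpr
      (mul_ne_zero (mul_ne_zero (by norm_num) hc) (pow_ne_zero 2 hs))
  have hb2 : u2 th 2 ≠ 0 := by
    rw [u2_two th]
    exact mul_ne_zero (mul_ne_zero (by norm_num) hc) (pow_ne_zero 3 hs)
  rw [det_zero_iff_wron hN hμ hμγ (rec_u1 th) (rec_u2 th) (u1_neg_one th) (u1_zero th)
    (u2_neg_one th) (u2_zero th) (u2_one th) ha1 hb2, wron th N]
  have hUs : (U ℂ ((N:ℤ)+1)).eval (Complex.cos th) * Complex.sin th
      = Complex.sin (((N:ℂ)+2)*th) := by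
    have h := Polynomial.Chebyshev.U_complex_cos th ((N:ℤ)+1)
    push_cast at h
    convert h using 3 <;> push_cast <;> ring
  have hU' : (derivative (U ℂ ((N:ℤ)+1))).eval (Complex.cos th) * Complex.sin th^3
      = Complex.sin (((N:ℂ)+2)*th) * Complex.cos th
        - ((N:ℂ)+2) * Complex.cos (((N:ℂ)+2)*th) * Complex.sin th := by
    have h := deriv_eval (N+1) th
    push_cast at h
    convert h using 3 <;> push_cast <;> ring
  rw [← hU', ← hUs]
  rw [show (-8 : ℂ) * Complex.cos th * Complex.sin th
        * ((U ℂ ((N:ℤ)+1)).eval (Complex.cos th) * Complex.sin th)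
        * ((derivative (U ℂ ((N:ℤ)+1))).eval (Complex.cos th) * Complex.sin th^3)
      = (-8 * Complex.cos th * Complex.sin th^5)
        * ((U ℂ ((N:ℤ)+1)).eval (Complex.cos th)
            * (derivative (U ℂ ((N:ℤ)+1))).eval (Complex.cos th)) from by ring,
    mul_eq_zero]
  constructor
  · rintro (h | h)
    · exact absurd h
        (mul_ne_zero (mul_ne_zero (by norm_num) hc) (pow_ne_zero 5 hs))
    · exact h
  · exact fun h => Or.inr h

lemma key_quarter (N : ℕ) (hN : 0 < N) : (matM N (1/4)).det ≠ 0 := by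
  intro h
  have hW := (det_zero_iff_wron hN (by norm_num) (by norm_num) rec_p1 rec_p2
    p1_neg_one p1_zero p2_neg_one p2_zero p2_one
    (by rw [p1_one]; norm_num) (by rw [p2_two]; norm_num)).mp h
  rw [wron_poly N] at hW
  have h1 : ((N:ℂ)+1) ≠ 0 := by
    have : ((N+1 : ℕ) : ℂ) ≠ 0 := Nat.cast_ne_zero.mpr (by omega)
    push_cast at this; exact this
  have h2 : ((N:ℂ)+2) ≠ 0 := by
    have : ((N+2 : ℕ) : ℂ) ≠ 0 := Nat.cast_ne_zero.mpr (by omega)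
    push_cast at this; exact this
  have h3 : ((N:ℂ)+3) ≠ 0 := by
    have : ((N+3 : ℕ) : ℂ) ≠ 0 := Nat.cast_ne_zero.mpr (by omega)
    push_cast at this; exact this
  exact (neg_ne_zero.mpr (mul_ne_zero (mul_ne_zero h1 (pow_ne_zero 2 h2)) h3)) hW

end ChebAux
end

theorem stmt1 (N : ℕ) (hN : 0 < N) (x : ℝ) (hx : x ≠ 0) :
    (((1 : Matrix (Fin N) (Fin N) ℝ) + matA N)
        - (1 / (4 * x ^ 2)) • ((1 : Matrix (Fin N) (Fin N) ℝ) - matB N)).det = 0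
      ↔ Ucheb (N + 1) x * Ucheb' (N + 1) x = 0 := by
  have hdet : ((((1 : Matrix (Fin N) (Fin N) ℝ) + matA N)
        - (1 / (4 * x ^ 2)) • ((1 : Matrix (Fin N) (Fin N) ℝ) - matB N)).det = 0)
      ↔ (ChebAux.matM N ((1 / (4 * x ^ 2) : ℝ) : ℂ)).det = 0 := by
    have hmap := RingHom.map_det (algebraMap ℝ ℂ)
      (((1 : Matrix (Fin N) (Fin N) ℝ) + matA N)
        - (1 / (4 * x ^ 2)) • ((1 : Matrix (Fin N) (Fin N) ℝ) - matB N))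
    rw [RingHom.mapMatrix_apply] at hmap
    rw [← ChebAux.map_pencil N (1/(4*x^2)), ← hmap]
    simp [Complex.coe_algebraMap, Complex.ofReal_eq_zero]
  have hUc : ((Ucheb (N+1) x : ℝ) : ℂ) = (Polynomial.Chebyshev.U ℂ ((N:ℤ)+1)).eval (x:ℂ) := by
    unfold Ucheb
    rw [← Polynomial.Chebyshev.map_U (algebraMap ℝ ℂ) ((N:ℤ)+1),
      show ((x:ℝ):ℂ) = algebraMap ℝ ℂ x from rfl, Polynomial.eval_map,
      Polynomial.eval₂_at_apply]
    rfl
  have hU'c : ((Ucheb' (N+1) x : ℝ) : ℂ)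
      = (Polynomial.derivative (Polynomial.Chebyshev.U ℂ ((N:ℤ)+1))).eval (x:ℂ) := by
    unfold Ucheb'
    rw [← Polynomial.Chebyshev.map_U (algebraMap ℝ ℂ) ((N:ℤ)+1), Polynomial.derivative_map,
      show ((x:ℝ):ℂ) = algebraMap ℝ ℂ x from rfl, Polynomial.eval_map,
      Polynomial.eval₂_at_apply]
    rfl
  have hRHS : (Ucheb (N + 1) x * Ucheb' (N + 1) x = 0)
      ↔ (Polynomial.Chebyshev.U ℂ ((N:ℤ)+1)).eval (x:ℂ)
          * (Polynomial.derivative (Polynomial.Chebyshev.U ℂ ((N:ℤ)+1))).eval (x:ℂ) = 0 := by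
    rw [← hUc, ← hU'c, ← Complex.ofReal_mul, Complex.ofReal_eq_zero]
  by_cases hx2 : x^2 = 1
  · apply iff_of_false
    · rw [hdet, show ((1 / (4 * x ^ 2) : ℝ) : ℂ) = 1/4 by rw [hx2]; norm_num]
      exact ChebAux.key_quarter N hN
    · have hxpm : x = 1 ∨ x = -1 := by
        have h : (x-1)*(x+1) = 0 := by linear_combination hx2
        rcases mul_eq_zero.mp h with h' | h'
        · left; linarith
        · right; linarith
      have hidx : ((N+1:ℕ):ℤ) = (N:ℤ)+1 := by push_cast; ring
      have hD := ChebAux.derivU_one_pos (N+1) (by omega)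
      rw [hidx] at hD
      rcases hxpm with rfl | rfl
      · have h1 : Ucheb (N+1) 1 ≠ 0 := by
          unfold Ucheb
          rw [show ((N:ℤ)+1) = ((N+1:ℕ):ℤ) from by push_cast; ring, ChebAux.U_eval_one (N+1)]
          positivity
        have h2 : Ucheb' (N+1) 1 ≠ 0 := by
          unfold Ucheb'
          exact ne_of_gt hD
        exact mul_ne_zero h1 h2
      · have h1 : Ucheb (N+1) (-1) ≠ 0 := by
          unfold Ucheb
          rw [show ((N:ℤ)+1) = ((N+1:ℕ):ℤ) from by push_cast; ring,
            ChebAux.U_eval_neg_one (N+1)]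
          apply mul_ne_zero
          · exact pow_ne_zero _ (by norm_num)
          · positivity
        have h2 : Ucheb' (N+1) (-1) ≠ 0 := by
          unfold Ucheb'
          rw [show ((N:ℤ)+1) = ((N+1:ℕ):ℤ) from by push_cast; ring,
            ChebAux.derivU_neg_one (N+1), hidx]
          exact mul_ne_zero (pow_ne_zero _ (by norm_num)) (ne_of_gt hD)
        exact mul_ne_zero h1 h2
  · obtain ⟨th, hth⟩ := Complex.cos_surjective (x:ℂ)
    have hc : Complex.cos th ≠ 0 := by rw [hth]; exact Complex.ofReal_ne_zero.mpr hx
    have hs : Complex.sin th ≠ 0 := by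
      intro h
      have hone := Complex.sin_sq_add_cos_sq th
      rw [h, hth] at hone
      apply hx2
      have : ((x:ℂ))^2 = 1 := by
        rw [← hone]; ring
      exact_mod_cast this
    have hμc : ((1 / (4 * x ^ 2) : ℝ) : ℂ) = 1/(4*Complex.cos th^2) := by
      rw [hth]; push_cast; ring
    rw [hdet, hμc, ChebAux.key_trig N hN th hc hs, hth, hRHS]
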